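/- Let s ≥ 0, 𝒜 ∈ Sp(d,ℝ), g ∈ 𝒮(ℝ^d) nonzero, and let T be a bounded linear operator on L²(ℝ^d) such that |⟨Tπ(z)g, π(w)g⟩| ≤ H(w−𝒜z) for all w, z ∈ ℝ^{2d} and some H ∈ L¹_{v_s}(ℝ^{2d}). Then the adjoint T* satisfies |⟨T*π(z)g, π(w)g⟩| ≤ H(−𝒜(w − 𝒜^{-1}z)) for all w, z ∈ ℝ^{2d}; moreover the function z ↦ H(−𝒜z) belongs to L¹_{v_s}(ℝ^{2d}), so T* satisfies the kernel bound defining FIO(𝒜^{-1}, v_s). -/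

import Mathlib

open MeasureTheory Complex SchwartzMap
open scoped Real ContDiff ENNReal

/-- Configuration space `ℝ^d`. -/
abbrev ConfSpace (d : ℕ) := EuclideanSpace ℝ (Fin d)

/-- Phase space `ℝ^{2d}`, with coordinates split as `(x, η)`. -/
abbrev PhaseSpace (d : ℕ) := EuclideanSpace ℝ (Fin d ⊕ Fin d)

/-- First (position) component of a phase-space point. -/
noncomputable def posPart {d : ℕ} (z : PhaseSpace d) : ConfSpace d := WithLp.toLp 2 (fun i => z (Sum.inl i))

/-- Second (frequency) component of a phase-space point. -/
noncomputable def freqPart {d : ℕ} (z : PhaseSpace d) : ConfSpace d := WithLp.toLp 2 (fun i => z (Sum.inr i))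

/-- Assemble a phase-space point from its components. -/
noncomputable def phasePt {d : ℕ} (x η : ConfSpace d) : PhaseSpace d := WithLp.toLp 2 (Sum.elim x η)

/-- The polynomial weight `v_s(z) = (1 + |z|^2)^(s/2)`. -/
noncomputable def vWeight (s : ℝ) {V : Type*} [NormedAddCommGroup V] (z : V) : ℝ :=
  (1 + ‖z‖ ^ 2) ^ (s / 2)

/-- The action of a matrix on `ℝ^{2d}`. -/
noncomputable def matApply {ι : Type*} [Fintype ι] (M : Matrix ι ι ℝ)
    (z : EuclideanSpace ℝ ι) : EuclideanSpace ℝ ι := WithLp.toLp 2 (M.mulVec z)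

/-- The standard symplectic matrix `J = [[0, -I],[I, 0]]`. -/
noncomputable def Jmat (d : ℕ) : Matrix (Fin d ⊕ Fin d) (Fin d ⊕ Fin d) ℝ :=
  Matrix.fromBlocks 0 (-1) 1 0

/-- `𝒜 ∈ Sp(d,ℝ)` iff `𝒜ᵀ J 𝒜 = J`. -/
def IsSymplectic {d : ℕ} (A : Matrix (Fin d ⊕ Fin d) (Fin d ⊕ Fin d) ℝ) : Prop :=
  A.transpose * Jmat d * A = Jmat d

/-- The time-frequency shift `π(z)f(t) = e^{2πi η·t} f(t - x)` of a plain function,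
where `z = (x, η)`. -/
noncomputable def tfShift {d : ℕ} (z : PhaseSpace d) (f : ConfSpace d → ℂ) :
    ConfSpace d → ℂ := fun t =>
  Complex.exp (2 * (π : ℂ) * Complex.I * ∑ i, (freqPart z i : ℂ) * (t i : ℂ)) *
    f (t - posPart z)

lemma schwartz_memℒp_two {ι : Type*} [Fintype ι]
    (g : SchwartzMap (EuclideanSpace ℝ ι) ℂ) : MemLp (⇑g) 2 (volume) := by
  rw [memLp_two_iff_integrable_sq_norm g.continuous.aestronglyMeasurable]
  have hbd : ∀ x, ‖(‖g x‖ ^ 2 : ℝ)‖ ≤ (SchwartzMap.seminorm ℝ 0 0 g) * ‖g x‖ := by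
    intro x
    have h1 : ‖g x‖ ≤ SchwartzMap.seminorm ℝ 0 0 g := by
      simpa using g.le_seminorm ℝ 0 0 x
    have h2 : (0:ℝ) ≤ ‖g x‖ := norm_nonneg _
    calc ‖(‖g x‖ ^ 2 : ℝ)‖ = ‖g x‖ * ‖g x‖ := by
          rw [Real.norm_eq_abs, _root_.abs_of_nonneg (by positivity : (0:ℝ) ≤ ‖g x‖ ^ 2)]; ring
      _ ≤ (SchwartzMap.seminorm ℝ 0 0 g) * ‖g x‖ := by nlinarith
  exact (g.integrable.norm.const_mul _).mono'
    (Continuous.aestronglyMeasurable (by fun_prop))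
    (Filter.Eventually.of_forall hbd)

lemma continuous_tfShift {d : ℕ} (z : PhaseSpace d) (g : SchwartzMap (ConfSpace d) ℂ) :
    Continuous (tfShift z (⇑g)) := by
  apply Continuous.mul
  · apply Complex.continuous_exp.comp
    fun_prop
  · exact g.continuous.comp (continuous_id.sub continuous_const)

lemma memℒp_two_tfShift {d : ℕ} (z : PhaseSpace d) (g : SchwartzMap (ConfSpace d) ℂ) :
    MemLp (tfShift z (⇑g)) 2 (volume) := by
  have htrans : MemLp (fun t : ConfSpace d => g (t - posPart z)) 2 volume :=
    (schwartz_memℒp_two g).comp_measurePreserving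
      (measurePreserving_sub_right volume (posPart z))
  refine htrans.of_le ?_ ?_
  · exact (continuous_tfShift z g).aestronglyMeasurable
  · refine Filter.Eventually.of_forall fun t => ?_
    have hre : (2 * (π : ℂ) * Complex.I * ∑ i, (freqPart z i : ℂ) * (t i : ℂ)).re = 0 := by
      have : (2 * (π : ℂ) * Complex.I * ∑ i, (freqPart z i : ℂ) * (t i : ℂ)) =
          ((2 * π * ∑ i, freqPart z i * t i : ℝ) : ℂ) * Complex.I := by
        push_cast; ring
      rw [this]
      simp
    have h1 : ‖Complex.exp (2 * (π : ℂ) * Complex.I *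
        ∑ i, (freqPart z i : ℂ) * (t i : ℂ))‖ = 1 := by
      rw [Complex.norm_exp, hre, Real.exp_zero]
    show ‖tfShift z (⇑g) t‖ ≤ ‖g (t - posPart z)‖
    rw [tfShift, norm_mul, h1, one_mul]

/-- `L²(ℝ^d)`. -/
noncomputable abbrev L2Space (d : ℕ) := Lp ℂ 2 (volume : Measure (ConfSpace d))

/-- The time-frequency shift `π(z)g` of a Schwartz function, as an element of `L²(ℝ^d)`. -/
noncomputable def tfShiftL2 {d : ℕ} (z : PhaseSpace d) (g : SchwartzMap (ConfSpace d) ℂ) :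
    L2Space d := (memℒp_two_tfShift z g).toLp

/-- Convolution on `ℝ^{2d}`: `(F ∗ H)(w) = ∫ F(w - z) H(z) dz`. -/
noncomputable def convFn {V : Type*} [NormedAddCommGroup V] [MeasureSpace V]
    (F H : V → ℝ) : V → ℝ := fun w => ∫ z, F (w - z) * H z



section Aux

open Matrix

lemma sympl_det_isUnit {d : ℕ} {A : Matrix (Fin d ⊕ Fin d) (Fin d ⊕ Fin d) ℝ}
    (hA : IsSymplectic A) : IsUnit A.det := by
  have hJJ : Jmat d * Jmat d = -1 := by
    simp [Jmat, Matrix.fromBlocks_multiply, ← Matrix.fromBlocks_one,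
      Matrix.fromBlocks_neg]
  have hJ : (Jmat d).det ≠ 0 := by
    intro h
    have h2 := congrArg Matrix.det hJJ
    rw [Matrix.det_mul, h, mul_zero] at h2
    have h3 : ((-1 : Matrix (Fin d ⊕ Fin d) (Fin d ⊕ Fin d) ℝ)).det
        = (-1 : ℝ) ^ (Fintype.card (Fin d ⊕ Fin d)) := by
      simpa using Matrix.det_neg (1 : Matrix (Fin d ⊕ Fin d) (Fin d ⊕ Fin d) ℝ)
    rw [h3] at h2
    have : ((-1 : ℝ) ^ (Fintype.card (Fin d ⊕ Fin d))) ≠ 0 := by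
      apply pow_ne_zero; norm_num
    exact this h2.symm
  have h := congrArg Matrix.det hA
  rw [Matrix.det_mul, Matrix.det_mul, Matrix.det_transpose] at h
  have h1 : A.det * A.det * (Jmat d).det = 1 * (Jmat d).det := by
    rw [one_mul]; linear_combination h
  have h2 : A.det * A.det = 1 := mul_right_cancel₀ hJ h1
  exact IsUnit.of_mul_eq_one _ h2

end Aux

/-- The adjoint of a generalized metaplectic operator in `FIO(𝒜, v_s)` satisfies the kernel
bound defining `FIO(𝒜⁻¹, v_s)`, with controlling function `z ↦ H(-𝒜z)`. -/
theorem adjoint_of_generalized_metaplectic (d : ℕ) (s : ℝ) (hs : 0 ≤ s)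
    (A : Matrix (Fin d ⊕ Fin d) (Fin d ⊕ Fin d) ℝ) (hA : IsSymplectic A)
    (g : SchwartzMap (ConfSpace d) ℂ) (hg : g ≠ 0)
    (T : L2Space d →L[ℂ] L2Space d)
    (H : PhaseSpace d → ℝ) (hm : Measurable H)
    (hi : Integrable (fun z => ‖H z‖ * vWeight s z))
    (hb : ∀ w z : PhaseSpace d,
      ‖inner (𝕜 := ℂ) (tfShiftL2 w g) (T (tfShiftL2 z g))‖ ≤ H (w - matApply A z)) :
    (∀ w z : PhaseSpace d,
      ‖inner (𝕜 := ℂ) (tfShiftL2 w g) ((ContinuousLinearMap.adjoint T) (tfShiftL2 z g))‖ ≤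
        H (-(matApply A (w - matApply A⁻¹ z)))) ∧
    Integrable (fun z => ‖H (-(matApply A z))‖ * vWeight s z) := by
  have hdA : IsUnit A.det := sympl_det_isUnit hA
  have hAA : A * A⁻¹ = 1 := Matrix.mul_nonsing_inv A hdA
  have hA'A : A⁻¹ * A = 1 := Matrix.nonsing_inv_mul A hdA
  -- the linear equivalence z ↦ -(A z)
  set f : PhaseSpace d →ₗ[ℝ] PhaseSpace d := -(Matrix.toEuclideanLin A) with hfdef
  have hfz : ∀ z : PhaseSpace d, f z = -(matApply A z) := by
    intro z; rfl
  set finv : PhaseSpace d →ₗ[ℝ] PhaseSpace d := -(Matrix.toEuclideanLin A⁻¹) with hfinvdef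
  have hfinvz : ∀ z : PhaseSpace d, finv z = -(matApply A⁻¹ z) := by
    intro z; rfl
  have hcomp1 : ∀ z : PhaseSpace d, f (finv z) = z := by
    intro z
    rw [hfinvz, hfz]; apply WithLp.ofLp_injective
    simp [matApply, Matrix.mulVec_neg, Matrix.mulVec_mulVec, hAA]
  have hcomp2 : ∀ z : PhaseSpace d, finv (f z) = z := by
    intro z
    rw [hfz, hfinvz]; apply WithLp.ofLp_injective
    simp [matApply, Matrix.mulVec_neg, Matrix.mulVec_mulVec, hA'A]
  have hAz : ∀ z : PhaseSpace d, matApply A z = -(f z) := by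
    intro z; rw [hfz, neg_neg]
  have hAinvz : ∀ z : PhaseSpace d, matApply A⁻¹ z = -(finv z) := by
    intro z; rw [hfinvz, neg_neg]
  have harg : ∀ w z : PhaseSpace d,
      -(matApply A (w - matApply A⁻¹ z)) = z - matApply A w := by
    intro w z
    calc -(matApply A (w - matApply A⁻¹ z))
        = -(matApply A (w + finv z)) := by rw [hAinvz z, sub_neg_eq_add]
      _ = f (w + finv z) := (hfz _).symm
      _ = f w + z := by rw [map_add, hcomp1]
      _ = z - matApply A w := by rw [hAz, sub_neg_eq_add, add_comm]
  constructor
  · intro w z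
    calc ‖inner (𝕜 := ℂ) (tfShiftL2 w g) ((ContinuousLinearMap.adjoint T) (tfShiftL2 z g))‖
        = ‖inner (𝕜 := ℂ) (T (tfShiftL2 w g)) (tfShiftL2 z g)‖ := by
          rw [ContinuousLinearMap.adjoint_inner_right]
      _ = ‖inner (𝕜 := ℂ) (tfShiftL2 z g) (T (tfShiftL2 w g))‖ := by
          rw [norm_inner_symm]
      _ ≤ H (z - matApply A w) := hb z w
      _ = H (-(matApply A (w - matApply A⁻¹ z))) := by rw [harg]
  · -- integrability
    let e : PhaseSpace d ≃ₗ[ℝ] PhaseSpace d :=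
      LinearEquiv.ofLinear f finv (LinearMap.ext hcomp1) (LinearMap.ext hcomp2)
    have hdetf : LinearMap.det f ≠ 0 := by
      have := (LinearEquiv.isUnit_det' e).ne_zero
      exact this
    have hfc : Continuous f := f.continuous_of_finiteDimensional
    have hmap : Measure.map f volume
        = ENNReal.ofReal |(LinearMap.det f)⁻¹| • volume :=
      Measure.map_linearMap_addHaar_eq_smul_addHaar volume hdetf
    have hG : Integrable (fun u => ‖H u‖ * vWeight s u)
        ((ENNReal.ofReal |(LinearMap.det f)⁻¹|) • volume) :=
      hi.smul_measure ENNReal.ofReal_ne_top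
    rw [← hmap] at hG
    have hGf : Integrable (fun z : PhaseSpace d =>
        ‖H (-(matApply A z))‖ * vWeight s (-(matApply A z))) volume := by
      have := hG.comp_measurable hfc.measurable
      refine this.congr (Filter.Eventually.of_forall fun z => ?_)
      simp only [Function.comp_apply, hfz]
    -- pointwise weight comparison
    let CL : PhaseSpace d →L[ℝ] PhaseSpace d :=
      LinearMap.toContinuousLinearMap (Matrix.toEuclideanLin A⁻¹)
    have hznorm : ∀ z : PhaseSpace d, ‖z‖ ≤ ‖CL‖ * ‖-(matApply A z)‖ := by
      intro z
      have h1 : CL (-(matApply A z)) = -z := by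
        show Matrix.toEuclideanLin A⁻¹ (-(matApply A z)) = -z
        rw [Matrix.toEuclideanLin_apply]; apply WithLp.ofLp_injective
        simp [matApply, Matrix.mulVec_neg, Matrix.mulVec_mulVec, hA'A]
      have := CL.le_opNorm (-(matApply A z))
      rw [h1, norm_neg] at this
      exact this
    have hvw : ∀ z : PhaseSpace d,
        vWeight s z ≤ (1 + ‖CL‖ ^ 2) ^ (s / 2) * vWeight s (-(matApply A z)) := by
      intro z
      have hCL : (0:ℝ) ≤ ‖CL‖ := norm_nonneg _
      have hz := hznorm z
      have hb1 : 1 + ‖z‖ ^ 2 ≤ (1 + ‖CL‖ ^ 2) * (1 + ‖-(matApply A z)‖ ^ 2) := by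
        have h0 : (0:ℝ) ≤ ‖-(matApply A z)‖ := norm_nonneg _
        have h00 : (0:ℝ) ≤ ‖z‖ := norm_nonneg _
        nlinarith [sq_nonneg (‖CL‖ * ‖-(matApply A z)‖)]
      have h2 : vWeight s z ≤ ((1 + ‖CL‖ ^ 2) * (1 + ‖-(matApply A z)‖ ^ 2)) ^ (s / 2) := by
        unfold vWeight
        apply Real.rpow_le_rpow (by positivity) hb1 (by positivity)
      rw [Real.mul_rpow (by positivity) (by positivity)] at h2
      exact h2
    -- conclude
    have hmeas : AEStronglyMeasurable
        (fun z : PhaseSpace d => ‖H (-(matApply A z))‖ * vWeight s z) volume := by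
      have h1 : Measurable fun z : PhaseSpace d => -(matApply A z) := by
        have : (fun z : PhaseSpace d => -(matApply A z)) = f := by
          funext z; rw [hfz]
        rw [this]; exact hfc.measurable
      have h2 : Measurable fun z : PhaseSpace d => ‖H (-(matApply A z))‖ :=
        (hm.comp h1).norm
      have h3 : Continuous fun z : PhaseSpace d => vWeight s z := by
        unfold vWeight
        apply Continuous.rpow_const (by fun_prop)
        intro z; left; positivity
      exact (h2.mul h3.measurable).aestronglyMeasurable
    refine ((hGf.const_mul ((1 + ‖CL‖ ^ 2) ^ (s / 2))).mono' hmeas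
      (Filter.Eventually.of_forall fun z => ?_))
    have hv0 : (0:ℝ) ≤ vWeight s z := by unfold vWeight; positivity
    rw [Real.norm_eq_abs, _root_.abs_of_nonneg (mul_nonneg (norm_nonneg (H _)) hv0)]
    calc ‖H (-(matApply A z))‖ * vWeight s z
        ≤ ‖H (-(matApply A z))‖ * ((1 + ‖CL‖ ^ 2) ^ (s / 2) * vWeight s (-(matApply A z))) :=
          mul_le_mul_of_nonneg_left (hvw z) (norm_nonneg _)
      _ = (1 + ‖CL‖ ^ 2) ^ (s / 2) * (‖H (-(matApply A z))‖ * vWeight s (-(matApply A z))) := by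
          ring
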